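/- The PF-D2 coefficient function d1 satisfies lim_{v→0⁺} d1(v) = 90987349/53222400 and lim_{v→0⁺} (d1(v) − 90987349/53222400)/v² = −16301796103/96864768000; in particular d1 tends to the corresponding coefficient of the classical Quinlan–Tremaine method as v → 0, and its v²-Taylor coefficient is three times that of the PF-D0 coefficient b1. -/

import Mathlib

open Filter

/-- The variable coefficient `d₁(v)` of the method PF-D2 (phase lag and its first
and second derivatives vanish at frequency `v`). -/
noncomputable def pfd2d1 (v : ℝ) : ℝ :=
  ((-30720) * (v ^ 2 - 1) * Real.cos v
      - 10 * ((-387) / (Real.sin (v / 2)) ^ 6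
        + 72 * (128 * Real.cos v + 127) / (Real.sin v) ^ 2
        + 2048 * (v ^ 2 - 3))
      - 8 * ((-47) * v ^ 4 - 2040 * v ^ 2
          - 40 * v * ((22 * Real.cos v + 22 * Real.cos (2 * v) + 9 * Real.cos (3 * v)
              + 14 * Real.cos (4 * v) + 8 * Real.cos (5 * v) - 5 * Real.cos (6 * v) + 11)
              * (Real.tan (v / 2)) ^ 3 - 27 * v ^ 3) / (Real.cos v - 1)
          + (4817 * v ^ 4 + 3120 * v ^ 2 + 4410) * Real.cos v
          - 2205 * Real.cos (2 * v) - 2205) / (Real.cos v - 1) ^ 4)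
    / (5120 * v ^ 4)

namespace PFD2proof

open Asymptotics Finset


noncomputable def Pc (x : ℝ) : ℝ :=
  1 - x^2/2 + x^4/24 - x^6/720 + x^8/40320 - x^10/3628800 + x^12/479001600
    - x^14/87178291200 + x^16/20922789888000

noncomputable def Qs (x : ℝ) : ℝ :=
  x - x^3/6 + x^5/120 - x^7/5040 + x^9/362880 - x^11/39916800 + x^13/6227020800
    - x^15/1307674368000 + x^17/355687428096000

private lemma two_pow_le_fact (n : ℕ) : 2^(n+1) ≤ Nat.factorial (2*n+18) := by
  induction n with
  | zero => norm_num [Nat.factorial]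
  | succ n ih =>
      have h1 : 2*(n+1)+18 = (2*n+20) := by ring
      have h2 : Nat.factorial (2*n+20) = ((2*n+20)*(2*n+19))*Nat.factorial (2*n+18) := by
        rw [show 2*n+20 = (2*n+19)+1 by ring, show 2*n+19 = (2*n+18)+1 by ring]
        rw [Nat.factorial_succ, Nat.factorial_succ]; ring
      rw [h1, h2, pow_succ]
      calc 2^(n+1)*2 ≤ Nat.factorial (2*n+18) * 2 := Nat.mul_le_mul_right 2 ih
        _ = 2 * Nat.factorial (2*n+18) := Nat.mul_comm _ _
        _ ≤ ((2*n+20)*(2*n+19))*Nat.factorial (2*n+18) :=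
            Nat.mul_le_mul_right _ (by nlinarith)

private lemma tail_term_bound (x : ℝ) (hx : |x| ≤ 1) (n : ℕ) (d : ℕ) (hd : 18 ≤ d)
    (hfac : (2:ℝ)^(n+1) ≤ (Nat.factorial d : ℝ)) :
    |x|^d / (Nat.factorial d : ℝ) ≤ |x|^18 * ((1/2)^n * (1/2)) := by
  have h1 : |x|^d ≤ |x|^18 := pow_le_pow_of_le_one (abs_nonneg x) hx hd
  have h2 : 1/(Nat.factorial d : ℝ) ≤ (1/2)^n * (1/2) := by
    rw [show ((1:ℝ)/2)^n * (1/2) = 1/2^(n+1) by rw [pow_succ, div_pow, one_pow]; ring]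
    exact one_div_le_one_div_of_le (by positivity) hfac
  calc |x|^d / (Nat.factorial d : ℝ) = |x|^d * (1/(Nat.factorial d : ℝ)) := by ring
    _ ≤ |x|^18 * ((1/2)^n * (1/2)) :=
        mul_le_mul h1 h2 (by positivity) (by positivity)

private lemma geom_aux (x : ℝ) :
    HasSum (fun i : ℕ => |x|^18 * ((1/2)^i * (1/2))) (|x|^18) := by
  have h := (hasSum_geometric_two.mul_right (1/2)).mul_left (|x|^18)
  rw [show (2:ℝ)*(1/2) = 1 by norm_num, mul_one] at h
  exact h

lemma cos_taylor (x : ℝ) (hx : |x| ≤ 1) : |Real.cos x - Pc x| ≤ |x|^18 := by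
  have hs := Real.hasSum_cos x
  set f : ℕ → ℝ := fun n => (-1)^n * x^(2*n) / (Nat.factorial (2*n) : ℝ) with hf
  have hsum : Summable f := hs.summable
  have key : (∑ i ∈ range 9, f i) + ∑' i, f (i + 9) = Real.cos x := by
    rw [Summable.sum_add_tsum_nat_add 9 hsum, hs.tsum_eq]
  have hP : (∑ i ∈ range 9, f i) = Pc x := by
    simp [hf, Finset.sum_range_succ, Nat.factorial, Pc]
    ring
  have htail : Real.cos x - Pc x = ∑' i, f (i + 9) := by
    rw [← hP, ← key]; ring
  rw [htail, ← Real.norm_eq_abs (∑' i, f (i+9))]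
  refine tsum_of_norm_bounded (geom_aux x) ?_
  intro i
  have he : ‖f (i + 9)‖ = |x|^(2*(i+9)) / (Nat.factorial (2*(i+9)) : ℝ) := by
    simp only [hf, Real.norm_eq_abs, abs_div, abs_mul, abs_pow, abs_neg, abs_one, one_pow, one_mul, Nat.abs_cast]
  rw [he]
  refine tail_term_bound x hx i (2*(i+9)) (by omega) ?_
  calc (2:ℝ)^(i+1) = ((2^(i+1) : ℕ) : ℝ) := by push_cast; ring
    _ ≤ _ := by
        have := two_pow_le_fact i
        have h2 : Nat.factorial (2*i+18) ≤ Nat.factorial (2*(i+9)) :=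
          Nat.factorial_le (by omega)
        exact_mod_cast le_trans this h2

lemma sin_taylor (x : ℝ) (hx : |x| ≤ 1) : |Real.sin x - Qs x| ≤ |x|^18 := by
  have hs := Real.hasSum_sin x
  set f : ℕ → ℝ := fun n => (-1)^n * x^(2*n+1) / (Nat.factorial (2*n+1) : ℝ) with hf
  have hsum : Summable f := hs.summable
  have key : (∑ i ∈ range 9, f i) + ∑' i, f (i + 9) = Real.sin x := by
    rw [Summable.sum_add_tsum_nat_add 9 hsum, hs.tsum_eq]
  have hP : (∑ i ∈ range 9, f i) = Qs x := by
    simp [hf, Finset.sum_range_succ, Nat.factorial, Qs]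
    ring
  have htail : Real.sin x - Qs x = ∑' i, f (i + 9) := by
    rw [← hP, ← key]; ring
  rw [htail, ← Real.norm_eq_abs (∑' i, f (i+9))]
  refine tsum_of_norm_bounded (geom_aux x) ?_
  intro i
  have he : ‖f (i + 9)‖ = |x|^(2*(i+9)+1) / (Nat.factorial (2*(i+9)+1) : ℝ) := by
    simp only [hf, Real.norm_eq_abs, abs_div, abs_mul, abs_pow, abs_neg, abs_one, one_pow, one_mul, Nat.abs_cast]
  rw [he]
  refine tail_term_bound x hx i (2*(i+9)+1) (by omega) ?_
  calc (2:ℝ)^(i+1) = ((2^(i+1) : ℕ) : ℝ) := by push_cast; ring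
    _ ≤ _ := by
        have := two_pow_le_fact i
        have h2 : Nat.factorial (2*i+18) ≤ Nat.factorial (2*(i+9)+1) :=
          Nat.factorial_le (by omega)
        exact_mod_cast le_trans this h2


def Ap (f g : ℝ → ℝ) : Prop :=
  ((fun v => f v - g v) =O[nhdsWithin (0:ℝ) (Set.Ioi 0)] fun v => v^18) ∧
  ((fun v => f v) =O[nhdsWithin (0:ℝ) (Set.Ioi 0)] fun _ => (1:ℝ)) ∧
  ((fun v => g v) =O[nhdsWithin (0:ℝ) (Set.Ioi 0)] fun _ => (1:ℝ))

lemma mem_l : Set.Ioo (0:ℝ) (1/6) ∈ nhdsWithin (0:ℝ) (Set.Ioi 0) :=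
  Ioo_mem_nhdsGT_of_mem (by norm_num)

lemma Ap.const (c : ℝ) : Ap (fun _ => c) (fun _ => c) := by
  refine ⟨?_, isBigO_const_const c one_ne_zero _, isBigO_const_const c one_ne_zero _⟩
  simp only [sub_self]
  exact isBigO_zero _ _

lemma Ap.var : Ap (fun v => v) (fun v => v) := by
  have hb : (fun v : ℝ => v) =O[nhdsWithin (0:ℝ) (Set.Ioi 0)] fun _ => (1:ℝ) := by
    apply IsBigO.of_bound 1
    filter_upwards [mem_l] with v hv
    simp only [Real.norm_eq_abs]
    rw [abs_of_pos hv.1]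
    norm_num
    linarith [hv.2]
  exact ⟨by simp only [sub_self]; exact isBigO_zero _ _, hb, hb⟩

lemma Ap.add {f g f' g' : ℝ → ℝ} (h : Ap f g) (h' : Ap f' g') :
    Ap (fun v => f v + f' v) (fun v => g v + g' v) := by
  refine ⟨?_, h.2.1.add h'.2.1, h.2.2.add h'.2.2⟩
  have e : (fun v => (f v + f' v) - (g v + g' v))
      = fun v => (f v - g v) + (f' v - g' v) := by funext v; ring
  rw [e]; exact h.1.add h'.1

lemma Ap.neg {f g : ℝ → ℝ} (h : Ap f g) : Ap (fun v => -f v) (fun v => -g v) := by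
  refine ⟨?_, h.2.1.neg_left, h.2.2.neg_left⟩
  have e : (fun v => (-f v) - (-g v)) = fun v => -(f v - g v) := by funext v; ring
  rw [e]; exact h.1.neg_left

lemma Ap.sub {f g f' g' : ℝ → ℝ} (h : Ap f g) (h' : Ap f' g') :
    Ap (fun v => f v - f' v) (fun v => g v - g' v) := by
  have := h.add h'.neg
  simpa [sub_eq_add_neg] using this

lemma obig_one_mul {f : ℝ → ℝ} {l : Filter ℝ} {g : ℝ → ℝ}
    (h : f =O[l] fun v => g v * (1:ℝ)) : f =O[l] g := by simpa using h

lemma Ap.mul {f g f' g' : ℝ → ℝ} (h : Ap f g) (h' : Ap f' g') :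
    Ap (fun v => f v * f' v) (fun v => g v * g' v) := by
  refine ⟨?_, ?_, ?_⟩
  · have e : (fun v => f v * f' v - g v * g' v)
        = fun v => (f v - g v) * f' v + g v * (f' v - g' v) := by funext v; ring
    rw [e]
    have A : (fun v => (f v - g v) * f' v)
        =O[nhdsWithin (0:ℝ) (Set.Ioi 0)] fun v => v^18 := by
      have := h.1.mul h'.2.1
      exact obig_one_mul this
    have B : (fun v => g v * (f' v - g' v))
        =O[nhdsWithin (0:ℝ) (Set.Ioi 0)] fun v => v^18 := by
      have := h.2.2.mul h'.1
      apply this.trans (isBigO_of_le _ fun x => ?_)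
      simp
    exact A.add B
  · have := h.2.1.mul h'.2.1
    exact obig_one_mul this
  · have := h.2.2.mul h'.2.2
    exact obig_one_mul this

lemma Ap.pow {f g : ℝ → ℝ} (h : Ap f g) : ∀ n : ℕ,
    Ap (fun v => f v ^ n) (fun v => g v ^ n)
  | 0 => by simpa using Ap.const 1
  | n+1 => by
      simp only [pow_succ]
      exact (Ap.pow h n).mul h

lemma ap_cos (k : ℝ) (hk0 : 0 ≤ k) (hk : k ≤ 6) :
    Ap (fun v => Real.cos (k*v)) (fun v => Pc (k*v)) := by
  have hev : ∀ v : ℝ, v ∈ Set.Ioo (0:ℝ) (1/6) → |Real.cos (k*v) - Pc (k*v)| ≤ 6^18 * v^18 := by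
    intro v hv
    have h1 : |k*v| ≤ 1 := by
      rw [abs_of_nonneg (mul_nonneg hk0 hv.1.le)]
      nlinarith [hv.1, hv.2]
    calc |Real.cos (k*v) - Pc (k*v)| ≤ |k*v|^18 := cos_taylor _ h1
      _ = |k|^18 * |v|^18 := by rw [abs_mul, mul_pow]
      _ ≤ 6^18 * v^18 := by
          rw [abs_of_nonneg hk0, abs_of_pos hv.1]
          have : k^18 ≤ 6^18 := pow_le_pow_left₀ hk0 hk 18
          nlinarith [pow_pos hv.1 18]
  refine ⟨?_, ?_, ?_⟩
  · apply IsBigO.of_bound (6^18)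
    filter_upwards [mem_l] with v hv
    simp only [Real.norm_eq_abs]
    calc |Real.cos (k*v) - Pc (k*v)| ≤ 6^18 * v^18 := hev v hv
      _ = 6^18 * |v^18| := by rw [abs_of_nonneg (by positivity)]
  · apply IsBigO.of_bound 1
    filter_upwards [mem_l] with v hv
    simp only [Real.norm_eq_abs]
    rw [abs_one]
    calc |Real.cos (k*v)| ≤ 1 := Real.abs_cos_le_one _
      _ ≤ 1*1 := by norm_num
  · apply IsBigO.of_bound 2
    filter_upwards [mem_l] with v hv
    simp only [Real.norm_eq_abs, abs_one]
    have h1 := hev v hv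
    have h2 : (6:ℝ)^18 * v^18 ≤ 1 := by
      have : v^18 ≤ (1/6)^18 := by
        apply pow_le_pow_left₀ hv.1.le hv.2.le
      calc (6:ℝ)^18 * v^18 ≤ 6^18 * (1/6)^18 := by nlinarith
        _ = 1 := by norm_num
    calc |Pc (k*v)| ≤ |Real.cos (k*v)| + |Real.cos (k*v) - Pc (k*v)| := by
          have := abs_sub_abs_le_abs_sub (Real.cos (k*v)) (Real.cos (k*v) - Pc (k*v))
          have h3 : Real.cos (k*v) - (Real.cos (k*v) - Pc (k*v)) = Pc (k*v) := by ring
          calc |Pc (k*v)| = |Real.cos (k*v) - (Real.cos (k*v) - Pc (k*v))| := by rw [h3]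
            _ ≤ |Real.cos (k*v)| + |Real.cos (k*v) - Pc (k*v)| := abs_sub _ _
      _ ≤ 1 + 1 := add_le_add (Real.abs_cos_le_one _) (h1.trans h2)
      _ = 2*1 := by norm_num

lemma ap_cos1 : Ap (fun v => Real.cos v) (fun v => Pc v) := by
  have := ap_cos 1 (by norm_num) (by norm_num)
  simpa using this

lemma ap_sin : Ap (fun v => Real.sin v) (fun v => Qs v) := by
  have hev : ∀ v : ℝ, v ∈ Set.Ioo (0:ℝ) (1/6) → |Real.sin v - Qs v| ≤ v^18 := by
    intro v hv
    have h1 : |v| ≤ 1 := by rw [abs_of_pos hv.1]; linarith [hv.2]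
    calc |Real.sin v - Qs v| ≤ |v|^18 := sin_taylor _ h1
      _ = v^18 := by rw [abs_of_pos hv.1]
  refine ⟨?_, ?_, ?_⟩
  · apply IsBigO.of_bound 1
    filter_upwards [mem_l] with v hv
    simp only [Real.norm_eq_abs]
    rw [abs_of_nonneg (by positivity : (0:ℝ) ≤ v^18)]
    simpa using hev v hv
  · apply IsBigO.of_bound 1
    filter_upwards [mem_l] with v hv
    simp only [Real.norm_eq_abs, abs_one]
    simpa using Real.abs_sin_le_one v
  · apply IsBigO.of_bound 2
    filter_upwards [mem_l] with v hv
    simp only [Real.norm_eq_abs, abs_one]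
    have h1 := hev v hv
    have h2 : v^18 ≤ 1 := by
      calc v^18 ≤ (1/6)^18 := pow_le_pow_left₀ hv.1.le hv.2.le 18
        _ ≤ 1 := by norm_num
    have h3 : Qs v = Real.sin v - (Real.sin v - Qs v) := by ring
    calc |Qs v| = |Real.sin v - (Real.sin v - Qs v)| := by rw [← h3]
      _ ≤ |Real.sin v| + |Real.sin v - Qs v| := abs_sub _ _
      _ ≤ 1 + 1 := add_le_add (Real.abs_sin_le_one v) (h1.trans h2)
      _ = 2*1 := by norm_num

noncomputable def NN (v : ℝ) : ℝ :=
  ((((((Real.cos v - 1)^5 * (Real.cos v + 1)^3) * ((((-30720) * (v^2 - 1)) * Real.cos v) + ((-20480) * (v^2 - 3)))) + (((-30960) * (Real.cos v - 1)^2) * (Real.cos v + 1)^3)) + (((720 * ((128 * Real.cos v) + 127)) * (Real.cos v - 1)^4) * (Real.cos v + 1)^2)) + ((-8) * ((((Real.cos v - 1) * (Real.cos v + 1)^3) * ((((((-47) * v^4) + ((-2040) * v^2)) + ((((4817 * v^4) + (3120 * v^2)) + 4410) * Real.cos v)) + ((-2205) * Real.cos (2*v))) + (-2205))) - ((40 *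 v) * (((((((((22 * Real.cos v) + (22 * Real.cos (2*v))) + (9 * Real.cos (3*v))) + (14 * Real.cos (4*v))) + (8 * Real.cos (5*v))) + ((-5) * Real.cos (6*v))) + 11) * Real.sin v^3) - ((27 * v^3) * (Real.cos v + 1)^3))))))

noncomputable def NNP (v : ℝ) : ℝ :=
  ((((((Pc v - 1)^5 * (Pc v + 1)^3) * ((((-30720) * (v^2 - 1)) * Pc v) + ((-20480) * (v^2 - 3)))) + (((-30960) * (Pc v - 1)^2) * (Pc v + 1)^3)) + (((720 * ((128 * Pc v) + 127)) * (Pc v - 1)^4) * (Pc v + 1)^2)) + ((-8) * ((((Pc v - 1) * (Pc v + 1)^3) * ((((((-47) * v^4) + ((-2040) * v^2)) + ((((4817 * v^4) + (3120 * v^2)) + 4410) * Pc v)) + ((-2205) * Pc (2*v))) + (-2205))) - ((40 * v) * (((((((((22 * Pc v) + (22 * Pc (2*v))) + (9 * Pc (3*v))) + (14 * Pc (4*v))) + (8 * Pc (5*v))) + ((-5) * Pc (6*v))) + 11) * Qs v^3) - ((27 * v^3) * (Pc v + 1)^3))))))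

noncomputable def DD (v : ℝ) : ℝ :=
  (((5120 * v^4) * (Real.cos v - 1)^5) * (Real.cos v + 1)^3)

noncomputable def DP (v : ℝ) : ℝ :=
  (((5120 * v^4) * (Pc v - 1)^5) * (Pc v + 1)^3)

noncomputable def R2 (v : ℝ) : ℝ :=
  (16301796103/75675600) + (-236068820287/908107200)*v^2 + (830097402171377/5557616064000)*v^4 + (-5223259819031561/66691392768000)*v^6 + (324493152050328739/11411638318080000)*v^8 + (-2079371190358580603/308114234588160000)*v^10 + (69910498006530498593/62115829692973056000)*v^12 + (-56464514198768171807/395836169612083200000)*v^14 + (21241655964623938365421/1453510414815569510400000)*v^16 + (-285181513366048112696683/225721617359594323968000000)*v^18 + (25957822769845163684058497/273980899151075590432358400000)*v^20 + (-82424848317893316454965617/13151083159251628340753203200000)*v^22 + (351115186426275086211311609/949800450390395380165509120000000)*v^24 + (-84380257131446863712661597587/4308294842970833444430749368320000000)*v^26 + (1045435072588557702898855487/1115088077004215715029135130624000000)*v^28 + (-12641129215404704487773551519/310197228693900007999013954519040000000)*v^30 + (55130452486425634247806369099/34121695156329000879891534997094400000000)*v^32 + (-10089313272812773695434259143309/171973343587898164434653336385355776000000000)*v^34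 + (440414745420770441351979317773/224888218538020676568392824503926784000000000)*v^36 + (-11344980442629166625740093600919611/188130239217981196983289017338759951155200000000000)*v^38 + (3879488010294895571184346025165869/2257562870615774363799468208065119413862400000000000)*v^40 + (-8619080858503225594780970064005057/189635281131725046559155329477470030764441600000000000)*v^42 + (1591215475581232667977678630623347/1422264608487937849193664971081025230733312000000000000)*v^44 + (-6139559715307518646974970801459519/238940454225973558664535715141612238763196416000000000000)*v^46 + (11701877472383021461236101288767781/21203455433834292264684850015927943204532387840000000000000)*v^48 + (-224248568829864264059686068185569879/20185689573010246235979977215163401930714833223680000000000000)*v^50 + (356076476294441161330582166752336987/1695597924132860683822318086073725762180045990789120000000000000)*v^52 + (-23936818139620508059342643702921/6409459746365964609836915215887422554837195161600000000000000)*v^54 + (13478724281569965011458411852717/215357847477896410890520351253817397842529757429760000000000000)*v^56 + (-6783467689133001344016274281239/6852295147023976710152920267166917204080492281856000000000000000)*v^58 + (441730890195181720199253431357371/29848597660436442549426120683779091340974624379764736000000000000000)*v^60 + (-7283278828045923882734739259/34788575361814035605391749048693579651485576200192000000000000000)*v^62 + (40201405152579983723159085514427/14327326877009492423724537928213963843667819702287073280000000000000000)*v^64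 + (-21460554385679994683076181590767/601747728834398681796430592984986481434048427496057077760000000000000000)*v^66 + (201944040655658427088865422400299/469363228490830971801215862528289455518557773446924520652800000000000000000)*v^68 + (-6942548979746652985180722167387/1408089685472492915403647587584868366555673320340773561958400000000000000000)*v^70 + (93162111862310809544760757004693/1734766492502111271777293827904557827596589530659833028332748800000000000000000)*v^72 + (-7895130051360448043941759794733/14193544029562728587268767682855473134881187069034997504540672000000000000000000)*v^74 + (2053791393867600860139873962983/374709562380456034703895466827384490760863338622523934119873740800000000000000000)*v^76 + (-192565696801726902795904850149/3747095623804560347038954668273844907608633386225239341198737408000000000000000000)*v^78 + (32133033057059960141611727759/70075554523098271425144087302783593077356260729407073393846517760000000000000000000)*v^80 + (-716941602777899843534678581589/184132278953756095453494232398976738759888244599108261226505956229120000000000000000000)*v^82 + (3058303550323661101048774961287/97221843287583218399444954706659718065220993148329161927595144888975360000000000000000000)*v^84 + (-506188715055748934691443364503/2094008932347946242449583639835747773712452160117858872286664659147161600000000000000000000)*v^86 + (576895723210273135219367188979/326665393446279613822135047814376652699142536978385984076719686826957209600000000000000000000)*v^88 + (-8008328776994120861747442197/653330786892559227644270095628753305398285073956771968153439373653914419200000000000000000000)*v^90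 + (1266333098747890883574073357/15679938885421421463462482295090079329558841774962527235682544967693946060800000000000000000000)*v^92 + (-553798580719002574357844759/1097595721979499502442373760656305553069118924247376906497778147738576224256000000000000000000000)*v^94 + (511112518332017259533380577/171224932628801922381010306662383666278782552182590797413653391047217890983936000000000000000000000)*v^96 + (-28588462476392594732614663/1712249326288019223810103066623836662787825521825907974136533910472178909839360000000000000000000000)*v^98 + (3899885522974758692266711/44255059510213419938476510029662239899746875025654236869990414916819393362001920000000000000000000000)*v^100 + (-125953071344390710116583/287657886816387229600097315192804559348354687666752539654937696959326056853012480000000000000000000000)*v^102 + (35250628182682279192757/17259473208983233776005838911568273560901281260005152379296261817559563411180748800000000000000000000000)*v^104 + (-61536799742363322667/6903789283593293510402335564627309424360512504002060951718504727023825364472299520000000000000000000000)*v^106 + (4290014947424478523/118350673433027888749754323965039590131894500068606759172317223891837006248096563200000000000000000000000)*v^108 + (-103042185095083234421/753893789768387651335935043657302189140167965437025055927660716191001729800375107584000000000000000000000000)*v^110 + (4296655744856093951/9046725477220651816031220523887626269682015585244300671131928594292020757604501291008000000000000000000000000)*v^112 + (-27307786265762081/18093450954441303632062441047775252539364031170488601342263857188584041515209002582016000000000000000000000000)*v^114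 + (150892050704165321/34739425832527302973559886811728484875578939847338114577146605802081359709201284957470720000000000000000000000000)*v^116 + (-9630334607/861592902592443030098211478465488216160191960499457206774469389932573405486142980096000000000000000000000000)*v^118 + (1394027/55141945765916353926285534621791245834252285471965261233566040955684697951113150726144000000000000000000000)*v^120 + (-1127111/22975810735798480802618972759079685764271785613318858847319183731535290812963812802560000000000000000000000000)*v^122 + (456103/5789904305421217162259981135288080812596489974556352429524434300346893284866880826245120000000000000000000000000)*v^124 + (-127/1286645401204714924946662474508462402799219994345856095449874288965976285525973516943360000000000000000000000000)*v^126 + (2161/25012386599419658140963118504444509110416836690083442495545556177498578990624925169378918400000000000000000000000000)*v^128 + (-1/25012386599419658140963118504444509110416836690083442495545556177498578990624925169378918400000000000000000000000000)*v^130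

noncomputable def RD (v : ℝ) : ℝ :=
  (-1280) + (4480/3)*v^2 + (-2480/3)*v^4 + (18248/63)*v^6 + (-5858/81)*v^8 + (61207/4455)*v^10 + (-18806863/9081072)*v^12 + (1985801/7783776)*v^14 + (-21945871/835871400)*v^16 + (1891851187/823834851840)*v^18 + (-271480493359/1568454814080000)*v^20 + (1391296905199/122339475498240000)*v^22 + (-1394623146779/2120550908636160000)*v^24 + (1082263183865027/32062729738578739200000)*v^26 + (-1191691436129503/769505513725889740800000)*v^28 + (10820446315116479/169291213019695742976000000)*v^30 + (-50902968892548449/21330692840481663614976000000)*v^32 + (13822857378260789/170645542723853308919808000000)*v^34 + (-4010736397098793/1597242279895266971489402880000)*v^36 + (876954729907957/12286479076117438242226176000000)*v^38 + (-25834712835821701351/13836111249592750140526952448000000000)*v^40 + (419383262088496542059/9297866759726328094434112045056000000000)*v^42 + (-4021601157935506627/3984800039882712040471762305024000000000)*v^44 + (8775939337258499723/418404004187684764249535042027520000000000)*v^46 + (-741877383854044747241/1827588690291807050241969063576207360000000000)*v^48 + (78972882661771232243/10769719067791005831783031981788364800000000000)*v^50 + (-718521323988990199/5799079498041310832498555682501427200000000000)*v^52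 + (397597224401568878507/202643033979555565730829529769329872076800000000000)*v^54 + (-11599083130854217/397651165579975599942758103942955008000000000000)*v^56 + (31728347609167992929/77814925048149337240638539431422670877491200000000000)*v^58 + (-345469369856638785557/64374165267105360808164609893267845907742720000000000000)*v^60 + (9335794597899382843019/140206931951755475840182520347537368387063644160000000000000)*v^62 + (-2408981566117963723/3089959932821057318791901274876856603571650560000000000000)*v^64 + (22315201552233340253/2588435666801639553972600375646843724068867276800000000000000)*v^66 + (-254673375027913944643/2826571748147390392938079610206353346683203066265600000000000000)*v^68 + (37751034951944103653/42398576222210855894071194153095300200248045993984000000000000000)*v^70 + (-33875566038497154443/4070263317332242165830834638697148819223812415422464000000000000000)*v^72 + (599690501993388567967/8148667161299148815993330946671691936086072455675772928000000000000000)*v^74 + (-10260225438354012083/16667728284475531669077267845464824414721511841154990080000000000000000)*v^76 + (17141075955957749137/3520224213681232288509118968962170916389183300851933904896000000000000000)*v^78 + (-1281624689460324067/35202242136812322885091189689621709163891833008519339048960000000000000000)*v^80 + (116371703281860727/452600256044729865665458153152279117821466424395248644915200000000000000000)*v^82 + (-9305895169129747/5431203072536758387985497837827349413857597092742983738982400000000000000000)*v^84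 + (4408077557948063/409667888899915489836620408338977212930973037852613630597529600000000000000000)*v^86 + (-32517346668422986369/511478552649322487370817312219379829888578457219745170073627656192000000000000000000)*v^88 + (2164703072433696409/6137742631791869848449807746632557958662941486636942040883531874304000000000000000000)*v^90 + (-22494339844126207/12275485263583739696899615493265115917325882973273884081767063748608000000000000000000)*v^92 + (2619002844007079/294611646326009752725590771838362782015821191358573217962409529966592000000000000000000)*v^94 + (-827276098165189/20622815242820682690791354028685394741107483395100125257368667097661440000000000000000000)*v^96 + (41475096539599/247473782913848192289496248344224736893289800741201503088424005171937280000000000000000000)*v^98 + (-1595001598121/2474737829138481922894962483442247368932898007412015030884240051719372800000000000000000000)*v^100 + (24482628398273/10809654837676889039205196127675736507498898496375681654902360545910220390400000000000000000000)*v^102 + (-38941111733/5404827418838444519602598063837868253749449248187840827451180272955110195200000000000000000000)*v^104 + (949424041/46327092161472381596593697690038870746423850698752921378152973768186658816000000000000000000000)*v^106 + (-949943/18530836864588952638637479076015548298569540279501168551261189507274663526400000000000000000000)*v^108 + (244913/2223700423750674316636497489121865795828344833540140226151342740872959623168000000000000000000000)*v^110 + (-4363/22237004237506743166364974891218657958283448335401402261513427408729596231680000000000000000000000)*v^112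 + (73/266844050850080917996379698694623895499401380024816827138161128904755154780160000000000000000000000)*v^114 + (-1/3735816711901132851949315781724734536991619320347435579934255804666572166922240000000000000000000000)*v^116 + (1/7172768086850175075742686300911490311023909095067076313473771144959818560490700800000000000000000000000)*v^118

lemma apNum : Ap NN NNP := by
  unfold NN NNP
  exact (Ap.add (Ap.add (Ap.add (Ap.mul (Ap.mul (Ap.pow (Ap.sub ap_cos1 (Ap.const 1)) 5) (Ap.pow (Ap.add ap_cos1 (Ap.const 1)) 3)) (Ap.add (Ap.mul (Ap.mul (Ap.const (-30720)) (Ap.sub (Ap.pow Ap.var 2) (Ap.const 1))) ap_cos1) (Ap.mul (Ap.const (-20480)) (Ap.sub (Ap.pow Ap.var 2) (Ap.const 3))))) (Ap.mul (Ap.mul (Ap.const (-30960)) (Ap.pow (Ap.sub ap_cos1 (Ap.const 1)) 2)) (Ap.pow (Ap.add ap_cos1 (Ap.const 1)) 3))) (Ap.mul (Ap.mul (Ap.mul (Ap.const 720) (Ap.add (Ap.mul (Ap.const 128) ap_cos1) (Ap.const 127))) (Ap.pow (Ap.sub ap_cos1 (Ap.const 1)) 4)) (Ap.pow (Ap.add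 ap_cos1 (Ap.const 1)) 2))) (Ap.mul (Ap.const (-8)) (Ap.sub (Ap.mul (Ap.mul (Ap.sub ap_cos1 (Ap.const 1)) (Ap.pow (Ap.add ap_cos1 (Ap.const 1)) 3)) (Ap.add (Ap.add (Ap.add (Ap.add (Ap.mul (Ap.const (-47)) (Ap.pow Ap.var 4)) (Ap.mul (Ap.const (-2040)) (Ap.pow Ap.var 2))) (Ap.mul (Ap.add (Ap.add (Ap.mul (Ap.const 4817) (Ap.pow Ap.var 4)) (Ap.mul (Ap.const 3120) (Ap.pow Ap.var 2))) (Ap.const 4410)) ap_cos1)) (Ap.mul (Ap.const (-2205)) (ap_cos 2 (by norm_num) (by norm_num)))) (Ap.const (-2205)))) (Ap.mul (Ap.mul (Ap.const 40) Ap.var) (Ap.sub (Ap.mul (Ap.add (Ap.add (Ap.add (Ap.add (Ap.add (Ap.add (Ap.mul (Ap.const 22) ap_cos1) (Ap.mul (Ap.const 22) (ap_cos 2 (by norm_num) (by norm_num)))) (Ap.mul (Ap.const 9) (ap_cos 3 (by norm_num) (by norm_num)))) (Ap.mul (Ap.const 14) (ap_cos 4 (by norm_num) (by norm_num)))) (Ap.mul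 (Ap.const 8) (ap_cos 5 (by norm_num) (by norm_num)))) (Ap.mul (Ap.const (-5)) (ap_cos 6 (by norm_num) (by norm_num)))) (Ap.const 11)) (Ap.pow ap_sin 3)) (Ap.mul (Ap.mul (Ap.const 27) (Ap.pow Ap.var 3)) (Ap.pow (Ap.add ap_cos1 (Ap.const 1)) 3)))))))

lemma apD : Ap DD DP := by
  unfold DD DP
  exact (Ap.mul (Ap.mul (Ap.mul (Ap.const 5120) (Ap.pow Ap.var 4)) (Ap.pow (Ap.sub ap_cos1 (Ap.const 1)) 5)) (Ap.pow (Ap.add ap_cos1 (Ap.const 1)) 3))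

set_option maxHeartbeats 2000000 in
lemma DP_eq (v : ℝ) : DP v = v^14 * RD v := by
  unfold DP RD Pc; ring

set_option maxHeartbeats 4000000 in
lemma NNP_eq (v : ℝ) : NNP v - (90987349/53222400)*DP v = v^16 * R2 v := by
  unfold NNP DP R2 Pc Qs; ring

lemma R2_cont : Continuous R2 := by unfold R2; fun_prop

lemma RD_cont : Continuous RD := by unfold RD; fun_prop

lemma R2_zero : R2 0 = 16301796103/75675600 := by norm_num [R2]

lemma RD_zero : RD 0 = -1280 := by norm_num [RD]

lemma hNumO : (fun v => NN v - NNP v) =O[nhdsWithin (0:ℝ) (Set.Ioi 0)] fun v => v^18 :=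
  apNum.1

lemma hDO : (fun v => DD v - DP v) =O[nhdsWithin (0:ℝ) (Set.Ioi 0)] fun v => v^18 :=
  apD.1

lemma trig_facts {v : ℝ} (hv : v ∈ Set.Ioo (0:ℝ) (1/6)) :
    Real.cos v < 1 ∧ 0 < Real.cos v ∧ Real.sin (v/2)^2 = (1 - Real.cos v)/2 ∧
      Real.tan (v/2) = Real.sin v / (1 + Real.cos v) := by
  obtain ⟨hv0, hv6⟩ := hv
  have hpi := Real.pi_gt_three
  have hsh : 0 < Real.sin (v/2) :=
    Real.sin_pos_of_pos_of_lt_pi (by linarith) (by linarith)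
  have hch : 0 < Real.cos (v/2) :=
    Real.cos_pos_of_mem_Ioo ⟨by linarith, by linarith⟩
  have hcv : Real.cos v = 2*Real.cos (v/2)^2 - 1 := by
    have := Real.cos_two_mul (v/2)
    rw [show 2*(v/2) = v by ring] at this
    linarith
  have hsq' : Real.sin (v/2)^2 = 1 - Real.cos (v/2)^2 := Real.sin_sq (v/2)
  have hsq : Real.sin (v/2)^2 = (1 - Real.cos v)/2 := by rw [hcv]; linarith
  have hclt : Real.cos v < 1 := by nlinarith
  have hcpos : 0 < Real.cos v :=
    Real.cos_pos_of_mem_Ioo ⟨by linarith, by linarith⟩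
  have hsv : Real.sin v = 2*Real.sin (v/2)*Real.cos (v/2) := by
    have := Real.sin_two_mul (v/2)
    rw [show 2*(v/2) = v by ring] at this
    linarith
  refine ⟨hclt, hcpos, hsq, ?_⟩
  rw [Real.tan_eq_sin_div_cos, hsv, hcv]
  rw [show 1 + (2*Real.cos (v/2)^2 - 1) = 2*Real.cos (v/2)^2 by ring]
  field_simp

lemma DD_ne {v : ℝ} (hv : v ∈ Set.Ioo (0:ℝ) (1/6)) : DD v ≠ 0 := by
  obtain ⟨hclt, hcpos, -, -⟩ := trig_facts hv
  unfold DD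
  have h1 : Real.cos v - 1 ≠ 0 := by linarith
  have h2 : Real.cos v + 1 ≠ 0 := by linarith
  have h3 : v ≠ 0 := ne_of_gt hv.1
  positivity

set_option maxHeartbeats 2000000 in
lemma rep {v : ℝ} (hv : v ∈ Set.Ioo (0:ℝ) (1/6)) : pfd2d1 v = NN v / DD v := by
  obtain ⟨hclt, hcpos, hsq, htan⟩ := trig_facts hv
  have hv0 : v ≠ 0 := ne_of_gt hv.1
  have h1 : Real.cos v - 1 ≠ 0 := by linarith
  have h1' : (1:ℝ) - Real.cos v ≠ 0 := by linarith
  have h2 : Real.cos v + 1 ≠ 0 := by linarith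
  have h2' : (1:ℝ) + Real.cos v ≠ 0 := by linarith
  have hs6 : Real.sin (v/2)^6 = ((1 - Real.cos v)/2)^3 := by
    rw [show (6:ℕ) = 2*3 from rfl, pow_mul, hsq]
  have hsin2 : Real.sin v ^ 2 = 1 - Real.cos v ^ 2 := Real.sin_sq v
  have hsin2' : (1:ℝ) - Real.cos v ^ 2 ≠ 0 := by
    rw [show (1:ℝ) - Real.cos v^2 = (1 - Real.cos v)*(1 + Real.cos v) by ring]
    exact mul_ne_zero h1' h2'
  unfold pfd2d1 NN DD
  rw [hs6, htan, hsin2]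
  field_simp
  ring

lemma ev_ne : ∀ᶠ v in nhdsWithin (0:ℝ) (Set.Ioi 0), v ≠ 0 := by
  filter_upwards [self_mem_nhdsWithin] with v hv
  exact ne_of_gt hv

lemma pow_tendsto_zero (k : ℕ) (hk : 0 < k) :
    Tendsto (fun v : ℝ => v^k) (nhdsWithin (0:ℝ) (Set.Ioi 0)) (nhds 0) := by
  have h : Tendsto (fun v : ℝ => v^k) (nhdsWithin (0:ℝ) (Set.Ioi 0)) (nhds (0^k)) :=
    ((continuous_pow k).tendsto (0:ℝ)).mono_left nhdsWithin_le_nhds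
  simpa [zero_pow (Nat.pos_iff_ne_zero.1 hk)] using h

lemma pow_littleO {m n : ℕ} (hm : 0 < m) (h : m < n) :
    (fun v : ℝ => v^n) =o[nhdsWithin (0:ℝ) (Set.Ioi 0)] fun v => v^m := by
  refine (isLittleO_iff_tendsto' ?_).2 ?_
  · filter_upwards [ev_ne] with v hv hm'
    exact absurd ((pow_eq_zero_iff (Nat.pos_iff_ne_zero.1 hm)).1 hm') hv
  · apply Tendsto.congr' ?_ (pow_tendsto_zero (n - m) (by omega))
    filter_upwards [ev_ne] with v hv
    rw [eq_div_iff (pow_ne_zero _ hv), ← pow_add]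
    congr 1
    omega

lemma hDD : Tendsto (fun v => DD v / v^14) (nhdsWithin (0:ℝ) (Set.Ioi 0)) (nhds (-1280)) := by
  have h1 : Tendsto (fun v : ℝ => DP v / v^14) (nhdsWithin (0:ℝ) (Set.Ioi 0)) (nhds (-1280)) := by
    have hRD : Tendsto RD (nhdsWithin (0:ℝ) (Set.Ioi 0)) (nhds (-1280)) := by
      have := (RD_cont.tendsto 0).mono_left (nhdsWithin_le_nhds (a := (0:ℝ)) (s := Set.Ioi 0))
      rwa [RD_zero] at this
    apply Tendsto.congr' ?_ hRD
    filter_upwards [ev_ne] with v hv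
    rw [DP_eq, mul_comm, mul_div_assoc, div_self (pow_ne_zero _ hv), mul_one]
  have h2 : Tendsto (fun v : ℝ => (DD v - DP v) / v^14) (nhdsWithin (0:ℝ) (Set.Ioi 0)) (nhds 0) :=
    (hDO.trans_isLittleO (pow_littleO (by norm_num) (by norm_num))).tendsto_div_nhds_zero
  have h3 := h1.add h2
  rw [add_zero] at h3
  apply Tendsto.congr ?_ h3
  intro v
  rw [← add_div]
  ring_nf

lemma hNN : Tendsto (fun v => (NN v - (90987349/53222400)*DD v) / v^16)
    (nhdsWithin (0:ℝ) (Set.Ioi 0)) (nhds (16301796103/75675600)) := by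
  have h1 : Tendsto (fun v : ℝ => (NNP v - (90987349/53222400)*DP v) / v^16)
      (nhdsWithin (0:ℝ) (Set.Ioi 0)) (nhds (16301796103/75675600)) := by
    have hR2 : Tendsto R2 (nhdsWithin (0:ℝ) (Set.Ioi 0)) (nhds (16301796103/75675600)) := by
      have := (R2_cont.tendsto 0).mono_left (nhdsWithin_le_nhds (a := (0:ℝ)) (s := Set.Ioi 0))
      rwa [R2_zero] at this
    apply Tendsto.congr' ?_ hR2
    filter_upwards [ev_ne] with v hv
    rw [NNP_eq, mul_comm, mul_div_assoc, div_self (pow_ne_zero _ hv), mul_one]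
  have hO : (fun v => (NN v - (90987349/53222400)*DD v) - (NNP v - (90987349/53222400)*DP v))
      =O[nhdsWithin (0:ℝ) (Set.Ioi 0)] fun v => v^18 := by
    have e : (fun v => (NN v - (90987349/53222400)*DD v) - (NNP v - (90987349/53222400)*DP v))
        = fun v => (NN v - NNP v) - (90987349/53222400)*(DD v - DP v) := by funext v; ring
    rw [e]
    exact hNumO.sub (hDO.const_mul_left _)
  have h2 : Tendsto (fun v : ℝ => ((NN v - (90987349/53222400)*DD v) - (NNP v - (90987349/53222400)*DP v)) / v^16)
      (nhdsWithin (0:ℝ) (Set.Ioi 0)) (nhds 0) :=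
    (hO.trans_isLittleO (pow_littleO (by norm_num) (by norm_num))).tendsto_div_nhds_zero
  have h3 := h1.add h2
  rw [add_zero] at h3
  apply Tendsto.congr ?_ h3
  intro v
  rw [← add_div]
  ring_nf

lemma main2 : Tendsto (fun v : ℝ => (pfd2d1 v - 90987349 / 53222400) / v ^ 2)
    (nhdsWithin (0:ℝ) (Set.Ioi 0)) (nhds (-16301796103 / 96864768000)) := by
  have hq := hNN.div hDD (by norm_num : (-1280:ℝ) ≠ 0)
  have hval : (16301796103/75675600 : ℝ) / (-1280) = -16301796103 / 96864768000 := by norm_num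
  rw [hval] at hq
  apply Tendsto.congr' ?_ hq
  filter_upwards [mem_l] with v hv
  have hd := DD_ne hv
  have hv0 : v ≠ 0 := ne_of_gt hv.1
  rw [rep hv]
  rw [Pi.div_apply]
  field_simp


end PFD2proof

/-- The PF-D2 coefficient `d₁` tends to the classical Quinlan–Tremaine coefficient
as `v → 0⁺`, and its `v²`-Taylor coefficient is three times that of the PF-D0
coefficient `b₁`. -/
theorem pfd2_d1_limit :
    Tendsto pfd2d1 (nhdsWithin 0 (Set.Ioi 0)) (nhds (90987349 / 53222400)) ∧
    Tendsto (fun v : ℝ => (pfd2d1 v - 90987349 / 53222400) / v ^ 2)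
      (nhdsWithin 0 (Set.Ioi 0)) (nhds (-16301796103 / 96864768000)) := by
  refine ⟨?_, PFD2proof.main2⟩
  have h1 := (PFD2proof.pow_tendsto_zero 2 (by norm_num)).mul PFD2proof.main2
  rw [zero_mul] at h1
  have h2 := h1.const_add (90987349 / 53222400 : ℝ)
  rw [add_zero] at h2
  apply Tendsto.congr' ?_ h2
  filter_upwards [PFD2proof.ev_ne] with v hv
  field_simp
  ring
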